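/- In every anonymous hedonic game on n agents in which all agents have strict and naturally single-peaked preferences over coalition sizes, every sequence of IS deviations (from any initial partition) has length at most n^3 + n^2; in particular the dynamics of IS deviations always converges to an individually stable partition in O(n^3) steps. -/
import Mathlib


/-- A partition of the agent set `A`, encoded by the map sending each agent to
the coalition containing it. -/
def IsPartition {A : Type*} [DecidableEq A] (π : A → Finset A) : Prop :=
  (∀ i, i ∈ π i) ∧ ∀ i j, i ∈ π j → π i = π j

/-- Strict part of a weak preference relation `r`. -/
def StrictPref {α : Type*} (r : α → α → Prop) (x y : α) : Prop :=
  r x y ∧ ¬ r y x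

/-- `π'` is obtained from `π` by an IS deviation of agent `i`, where
`wp j C D` means that agent `j` weakly prefers coalition `C` to coalition `D`. -/
def IsISDeviation {A : Type*} [DecidableEq A]
    (wp : A → Finset A → Finset A → Prop) (π π' : A → Finset A) (i : A) : Prop :=
  π' i ≠ π i ∧
  (∀ j, j ≠ i → (π' j).erase i = (π j).erase i) ∧
  StrictPref (wp i) (π' i) (π i) ∧
  ∀ j ∈ (π' i).erase i, wp j (π' j) (π j)

/-- One step of the dynamics of IS deviations between partitions. -/
def ISStep {A : Type*} [DecidableEq A]
    (wp : A → Finset A → Finset A → Prop) (π π' : A → Finset A) : Prop :=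
  IsPartition π ∧ IsPartition π' ∧ ∃ i, IsISDeviation wp π π' i

/-- A partition is individually stable if no IS deviation from it is possible. -/
def IndividuallyStable {A : Type*} [DecidableEq A]
    (wp : A → Finset A → Finset A → Prop) (π : A → Finset A) : Prop :=
  IsPartition π ∧ ∀ π' : A → Finset A, ¬ ISStep wp π π'

/-- `r` is a weak order (total preorder) on the set `S`. -/
def WeakOrderOn {α : Type*} (r : α → α → Prop) (S : Set α) : Prop :=
  (∀ x ∈ S, ∀ y ∈ S, r x y ∨ r y x) ∧
  ∀ x ∈ S, ∀ y ∈ S, ∀ z ∈ S, r x y → r y z → r x z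

/-- `r` is antisymmetric on `S`, i.e. the preferences are strict. -/
def StrictPrefsOn {α : Type*} (r : α → α → Prop) (S : Set α) : Prop :=
  ∀ x ∈ S, ∀ y ∈ S, r x y → r y x → x = y

/-- `r` is (naturally) single-peaked on `S` with respect to the natural linear
order of `α`: whenever `y` lies strictly between `x` and `z`, `x ≻ y` implies `y ≿ z`. -/
def SinglePeakedOn {α : Type*} [LinearOrder α] (r : α → α → Prop) (S : Set α) : Prop :=
  ∀ x ∈ S, ∀ y ∈ S, ∀ z ∈ S,
    ((x < y ∧ y < z) ∨ (z < y ∧ y < x)) → StrictPref r x y → r y z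

/-- Coalition preferences of an anonymous hedonic game: coalitions are compared
by their sizes via the size preferences `sp`. -/
def ahgPref {A : Type*} [DecidableEq A] (sp : A → ℕ → ℕ → Prop) :
    A → Finset A → Finset A → Prop :=
  fun i C D => sp i C.card D.card


namespace AHGAux



/-- A bundled "nice" preference relation on sizes `1..n`. -/
structure Nice (r : ℕ → ℕ → Prop) (n : ℕ) : Prop where
  tot : ∀ x ∈ Finset.Icc 1 n, ∀ y ∈ Finset.Icc 1 n, r x y ∨ r y x
  tr : ∀ x ∈ Finset.Icc 1 n, ∀ y ∈ Finset.Icc 1 n, ∀ z ∈ Finset.Icc 1 n,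
    r x y → r y z → r x z
  anti : ∀ x ∈ Finset.Icc 1 n, ∀ y ∈ Finset.Icc 1 n, r x y → r y x → x = y
  spk : ∀ x ∈ Finset.Icc 1 n, ∀ y ∈ Finset.Icc 1 n, ∀ z ∈ Finset.Icc 1 n,
    ((x < y ∧ y < z) ∨ (z < y ∧ y < x)) → StrictPref r x y → r y z

lemma exists_top (r : ℕ → ℕ → Prop) :
    ∀ S : Finset ℕ, S.Nonempty →
    (∀ x ∈ S, ∀ y ∈ S, r x y ∨ r y x) →
    (∀ x ∈ S, ∀ y ∈ S, ∀ z ∈ S, r x y → r y z → r x z) →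
    ∃ p ∈ S, ∀ t ∈ S, r p t := by
  intro S
  induction S using Finset.induction with
  | empty => intro h; simp at h
  | @insert a s ha ih =>
    intro _ htot htrans
    have hamem : a ∈ insert a s := Finset.mem_insert_self a s
    by_cases hs : s.Nonempty
    · obtain ⟨p, hp, hall⟩ := ih hs
        (fun x hx y hy => htot x (Finset.mem_insert_of_mem hx) y (Finset.mem_insert_of_mem hy))
        (fun x hx y hy z hz => htrans x (Finset.mem_insert_of_mem hx)
          y (Finset.mem_insert_of_mem hy) z (Finset.mem_insert_of_mem hz))
      have hpmem : p ∈ insert a s := Finset.mem_insert_of_mem hp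
      rcases htot p hpmem a hamem with h | h
      · refine ⟨p, hpmem, ?_⟩
        intro t ht
        rcases Finset.mem_insert.mp ht with rfl | ht'
        · exact h
        · exact hall t ht'
      · refine ⟨a, hamem, ?_⟩
        intro t ht
        rcases Finset.mem_insert.mp ht with rfl | ht'
        · rcases htot t ht t ht with h' | h' <;> exact h'
        · exact htrans a hamem p hpmem t (Finset.mem_insert_of_mem ht') h (hall t ht')
    · refine ⟨a, hamem, ?_⟩
      intro t ht
      rcases Finset.mem_insert.mp ht with rfl | ht'
      · rcases htot t ht t ht with h' | h' <;> exact h'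
      · exact absurd ⟨t, ht'⟩ hs

/-- The peak (top-ranked size) of a size preference. -/
noncomputable def pk (r : ℕ → ℕ → Prop) (n : ℕ) : ℕ :=
  @dite _ (∃ p ∈ Finset.Icc 1 n, ∀ t ∈ Finset.Icc 1 n, r p t)
    (Classical.propDecidable _) (fun h => h.choose) (fun _ => 1)

variable {r : ℕ → ℕ → Prop} {n : ℕ}

lemma pk_spec (hN : Nice r n) (hn : 1 ≤ n) :
    (1 ≤ pk r n ∧ pk r n ≤ n) ∧ ∀ t, 1 ≤ t → t ≤ n → r (pk r n) t := by
  have hex : ∃ p ∈ Finset.Icc 1 n, ∀ t ∈ Finset.Icc 1 n, r p t :=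
    exists_top r _ ⟨1, by simp [hn]⟩ hN.tot hN.tr
  rw [pk, dif_pos hex]
  obtain ⟨h1, h2⟩ := hex.choose_spec
  refine ⟨Finset.mem_Icc.mp h1, fun t ht1 ht2 => h2 t (Finset.mem_Icc.mpr ⟨ht1, ht2⟩)⟩

lemma rrefl (hN : Nice r n) {s : ℕ} (h1 : 1 ≤ s) (h2 : s ≤ n) : r s s := by
  have := hN.tot s (Finset.mem_Icc.mpr ⟨h1, h2⟩) s (Finset.mem_Icc.mpr ⟨h1, h2⟩)
  tauto

lemma left_strict (hN : Nice r n) (hn : 1 ≤ n) {x y : ℕ}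
    (hx : 1 ≤ x) (hxy : x < y) (hyp : y ≤ pk r n) : StrictPref r y x := by
  obtain ⟨⟨hp1, hp2⟩, htop⟩ := pk_spec hN hn
  have hyn : y ≤ n := le_trans hyp hp2
  have hy1 : 1 ≤ y := le_trans hx (le_of_lt hxy)
  have hxn : x ≤ n := le_trans (le_of_lt hxy) hyn
  have mx : x ∈ Finset.Icc 1 n := Finset.mem_Icc.mpr ⟨hx, hxn⟩
  have my : y ∈ Finset.Icc 1 n := Finset.mem_Icc.mpr ⟨hy1, hyn⟩
  have mp : pk r n ∈ Finset.Icc 1 n := Finset.mem_Icc.mpr ⟨hp1, hp2⟩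
  have hns : ¬ StrictPref r x y := by
    intro hs
    rcases eq_or_lt_of_le hyp with heq | hlt
    · exact hs.2 (heq ▸ htop x hx hxn)
    · have hryp : r y (pk r n) := hN.spk x mx y my _ mp (Or.inl ⟨hxy, hlt⟩) hs
      have : y = pk r n := hN.anti y my _ mp hryp (htop y hy1 hyn)
      omega
  have hne : x ≠ y := Nat.ne_of_lt hxy
  rcases hN.tot y my x mx with h | h
  · exact ⟨h, fun h2 => hne (hN.anti x mx y my h2 h)⟩
  · by_cases h2 : r y x
    · exact absurd (hN.anti x mx y my h h2) hne
    · exact absurd ⟨h, h2⟩ hns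

lemma right_strict (hN : Nice r n) (hn : 1 ≤ n) {x y : ℕ}
    (hpx : pk r n ≤ x) (hxy : x < y) (hyn : y ≤ n) : StrictPref r x y := by
  obtain ⟨⟨hp1, hp2⟩, htop⟩ := pk_spec hN hn
  have hx1 : 1 ≤ x := le_trans hp1 hpx
  have hxn : x ≤ n := le_trans (le_of_lt hxy) hyn
  have hy1 : 1 ≤ y := le_trans hx1 (le_of_lt hxy)
  have mx : x ∈ Finset.Icc 1 n := Finset.mem_Icc.mpr ⟨hx1, hxn⟩
  have my : y ∈ Finset.Icc 1 n := Finset.mem_Icc.mpr ⟨hy1, hyn⟩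
  have mp : pk r n ∈ Finset.Icc 1 n := Finset.mem_Icc.mpr ⟨hp1, hp2⟩
  have hns : ¬ StrictPref r y x := by
    intro hs
    rcases eq_or_lt_of_le hpx with heq | hlt
    · exact hs.2 (heq ▸ htop y hy1 hyn)
    · have hrxp : r x (pk r n) := hN.spk y my x mx _ mp (Or.inr ⟨hlt, hxy⟩) hs
      have : x = pk r n := hN.anti x mx _ mp hrxp (htop x hx1 hxn)
      omega
  have hne : x ≠ y := Nat.ne_of_lt hxy
  rcases hN.tot x mx y my with h | h
  · exact ⟨h, fun h2 => hne (hN.anti x mx y my h h2)⟩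
  · by_cases h2 : r x y
    · exact ⟨h2, fun h3 => hne (hN.anti x mx y my h2 h3)⟩
    · exact absurd ⟨h, h2⟩ hns

/-- number of sizes `t ∈ [1, pk]` with `s ≿ t`. -/
noncomputable def g (r : ℕ → ℕ → Prop) (n s : ℕ) : ℕ :=
  (@Finset.filter _ (fun t => r s t) (Classical.decPred _) (Finset.Icc 1 (pk r n))).card

lemma g_eq (hN : Nice r n) (hn : 1 ≤ n) {s : ℕ} (h1 : 1 ≤ s) (hsp : s ≤ pk r n) :
    g r n s = s := by
  obtain ⟨⟨hp1, hp2⟩, _⟩ := pk_spec hN hn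
  have hsn : s ≤ n := le_trans hsp hp2
  have : (@Finset.filter _ (fun t => r s t) (Classical.decPred _) (Finset.Icc 1 (pk r n)))
      = Finset.Icc 1 s := by
    ext t
    simp only [Finset.mem_filter, Finset.mem_Icc]
    constructor
    · rintro ⟨⟨ht1, htp⟩, hrst⟩
      refine ⟨ht1, ?_⟩
      by_contra hts
      push_neg at hts
      exact (left_strict hN hn h1 hts htp).2 hrst
    · rintro ⟨ht1, hts⟩
      refine ⟨⟨ht1, le_trans hts hsp⟩, ?_⟩
      rcases eq_or_lt_of_le hts with rfl | hlt
      · exact rrefl hN h1 hsn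
      · exact (left_strict hN hn ht1 hlt hsp).1
  rw [g, this, Nat.card_Icc]
  omega

lemma g_le_pk {s : ℕ} : g r n s ≤ pk r n := by
  unfold g
  have h := Finset.card_le_card
    (@Finset.filter_subset _ (fun t => r s t) (Classical.decPred _) (Finset.Icc 1 (pk r n)))
  rw [Nat.card_Icc] at h
  omega

lemma g_mono (hN : Nice r n) {a b : ℕ} (ha1 : 1 ≤ a) (han : a ≤ n)
    (hb1 : 1 ≤ b) (hbn : b ≤ n) (hpk : pk r n ≤ n) (hab : r a b) :
    g r n b ≤ g r n a := by
  unfold g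
  apply Finset.card_le_card
  intro t ht
  simp only [Finset.mem_filter, Finset.mem_Icc] at ht ⊢
  obtain ⟨⟨ht1, htp⟩, hrbt⟩ := ht
  refine ⟨⟨ht1, htp⟩, ?_⟩
  exact hN.tr a (Finset.mem_Icc.mpr ⟨ha1, han⟩) b (Finset.mem_Icc.mpr ⟨hb1, hbn⟩)
    t (Finset.mem_Icc.mpr ⟨ht1, le_trans htp hpk⟩) hab hrbt

lemma g_lt (hN : Nice r n) (hn : 1 ≤ n) {y d : ℕ} (hy1 : 1 ≤ y) (hyp : y ≤ pk r n)
    (hd1 : 1 ≤ d) (hdn : d ≤ n) (hs : StrictPref r y d) : g r n d < y := by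
  obtain ⟨⟨hp1, hp2⟩, _⟩ := pk_spec hN hn
  have hyn : y ≤ n := le_trans hyp hp2
  have my : y ∈ Finset.Icc 1 n := Finset.mem_Icc.mpr ⟨hy1, hyn⟩
  have md : d ∈ Finset.Icc 1 n := Finset.mem_Icc.mpr ⟨hd1, hdn⟩
  have hsub : (@Finset.filter _ (fun t => r d t) (Classical.decPred _) (Finset.Icc 1 (pk r n)))
      ⊆ Finset.Icc 1 (y - 1) := by
    intro t ht
    simp only [Finset.mem_filter, Finset.mem_Icc] at ht ⊢
    obtain ⟨⟨ht1, htp⟩, hrdt⟩ := ht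
    refine ⟨ht1, ?_⟩
    by_contra hty
    push_neg at hty
    have hty' : y ≤ t := by omega
    have htn : t ≤ n := le_trans htp hp2
    have mt : t ∈ Finset.Icc 1 n := Finset.mem_Icc.mpr ⟨ht1, htn⟩
    have hrty : r t y := by
      rcases eq_or_lt_of_le hty' with rfl | hlt
      · exact rrefl hN hy1 hyn
      · exact (left_strict hN hn hy1 hlt htp).1
    have hrtd : r t d := hN.tr t mt y my d md hrty hs.1
    have : t = d := hN.anti t mt d md hrtd hrdt
    subst this
    exact hs.2 hrty
  have := Finset.card_le_card hsub
  rw [Nat.card_Icc] at this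
  unfold g
  omega

/-- The per-agent potential. -/
noncomputable def theta (r : ℕ → ℕ → Prop) (n s : ℕ) : ℤ :=
  2*(n:ℤ)*(g r n s : ℤ) - (n:ℤ)*((s:ℤ) - 1) +
    (if pk r n < s then 2*(n:ℤ) - 2*((s:ℤ) - (pk r n : ℤ)) else 0)



variable {r : ℕ → ℕ → Prop} {n : ℕ}

lemma theta_le (hN : Nice r n) (hn : 1 ≤ n) {s : ℕ} (h1 : 1 ≤ s) (h2 : s ≤ n) :
    theta r n s ≤ (n:ℤ)^2 + n := by
  obtain ⟨⟨hp1, hp2⟩, _⟩ := pk_spec hN hn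
  have hnZ : (1:ℤ) ≤ n := by exact_mod_cast hn
  have hsZ : (s:ℤ) ≤ n := by exact_mod_cast h2
  unfold theta
  by_cases hps : pk r n < s
  · rw [if_pos hps]
    have hg : (g r n s : ℤ) ≤ (pk r n : ℤ) := by exact_mod_cast (g_le_pk (r := r) (n := n))
    have hpsZ : (pk r n : ℤ) + 1 ≤ s := by exact_mod_cast hps
    nlinarith [mul_le_mul_of_nonneg_left (hg.trans (by linarith : (pk r n : ℤ) ≤ (s:ℤ) - 1))
        (by linarith : (0:ℤ) ≤ 2*(n:ℤ)),
      mul_le_mul_of_nonneg_left (by linarith : (s:ℤ) - 1 ≤ (n:ℤ) - 1)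
        (by linarith : (0:ℤ) ≤ (n:ℤ))]
  · rw [if_neg hps]
    push_neg at hps
    rw [g_eq hN hn h1 hps]
    nlinarith [mul_le_mul_of_nonneg_left hsZ (by linarith : (0:ℤ) ≤ (n:ℤ))]

lemma theta_ge (hN : Nice r n) (hn : 1 ≤ n) {s : ℕ} (h1 : 1 ≤ s) (h2 : s ≤ n) :
    (n:ℤ) - (n:ℤ)^2 ≤ theta r n s := by
  obtain ⟨⟨hp1, hp2⟩, _⟩ := pk_spec hN hn
  have hnZ : (1:ℤ) ≤ n := by exact_mod_cast hn
  have hsZ : (s:ℤ) ≤ n := by exact_mod_cast h2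
  have hs1 : (1:ℤ) ≤ (s:ℤ) := by exact_mod_cast h1
  unfold theta
  by_cases hps : pk r n < s
  · rw [if_pos hps]
    have hg : (0:ℤ) ≤ (g r n s : ℤ) := by positivity
    have hp1Z : (1:ℤ) ≤ (pk r n : ℤ) := by exact_mod_cast hp1
    nlinarith [mul_le_mul_of_nonneg_left (by linarith : (s:ℤ) - 1 ≤ (n:ℤ) - 1)
        (by linarith : (0:ℤ) ≤ (n:ℤ)), mul_nonneg (by linarith : (0:ℤ) ≤ 2*(n:ℤ)) hg]
  · rw [if_neg hps]
    push_neg at hps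
    rw [g_eq hN hn h1 hps]
    nlinarith [mul_le_mul_of_nonneg_left hs1 (by linarith : (0:ℤ) ≤ (n:ℤ))]

lemma theta_of_le {s : ℕ} (h : s ≤ pk r n) :
    theta r n s = 2*(n:ℤ)*(g r n s : ℤ) - (n:ℤ)*((s:ℤ) - 1) := by
  unfold theta
  rw [if_neg (by omega)]
  ring

lemma theta_of_gt {s : ℕ} (h : pk r n < s) :
    theta r n s = 2*(n:ℤ)*(g r n s : ℤ) - (n:ℤ)*((s:ℤ) - 1)
      + (2*(n:ℤ) - 2*((s:ℤ) - (pk r n : ℤ))) := by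
  unfold theta
  rw [if_pos h]

lemma theta_joined (hN : Nice r n) (hn : 1 ≤ n) {c : ℕ} (hc1 : 1 ≤ c) (hcn : c + 1 ≤ n)
    (hr : r (c+1) c) : theta r n (c+1) = theta r n c + n := by
  have hpk : c + 1 ≤ pk r n := by
    by_contra hcon
    push_neg at hcon
    exact (right_strict hN hn (x := c) (y := c+1) (by omega) (by omega) hcn).2 hr
  have g1 : g r n (c+1) = c+1 := g_eq hN hn (by omega) hpk
  have g0 : g r n c = c := g_eq hN hn hc1 (by omega)
  unfold theta
  rw [if_neg (by omega), if_neg (by omega), g1, g0]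
  push_cast
  ring

lemma theta_aband (hN : Nice r n) (hn : 1 ≤ n) {k : ℕ} (hk1 : 1 ≤ k) (hkn : k + 1 ≤ n) :
    theta r n (k+1) - n ≤ theta r n k := by
  obtain ⟨⟨hp1, hp2⟩, _⟩ := pk_spec hN hn
  by_cases hcase : k + 1 ≤ pk r n
  · have g1 : g r n (k+1) = k+1 := g_eq hN hn (by omega) hcase
    have g0 : g r n k = k := g_eq hN hn hk1 (by omega)
    unfold theta
    rw [if_neg (by omega), if_neg (by omega), g1, g0]
    push_cast
    ring_nf
    omega
  · have hpk : pk r n ≤ k := by omega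
    have hkk : StrictPref r k (k+1) := right_strict hN hn hpk (by omega) hkn
    have hmono : g r n (k+1) ≤ g r n k :=
      g_mono hN (by omega) (by omega) (by omega) hkn hp2 hkk.1
    have hmZ : (g r n (k+1) : ℤ) ≤ (g r n k : ℤ) := by exact_mod_cast hmono
    have hmul : 2*(n:ℤ)*(g r n (k+1) : ℤ) ≤ 2*(n:ℤ)*(g r n k : ℤ) :=
      mul_le_mul_of_nonneg_left hmZ (by positivity)
    rw [theta_of_gt (s := k+1) (by omega)]
    by_cases hcase2 : pk r n < k
    · rw [theta_of_gt (s := k) hcase2]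
      push_cast
      linarith
    · have hpkk : pk r n = k := by omega
      rw [theta_of_le (s := k) (by omega), hpkk]
      push_cast
      linarith

lemma theta_mover (hN : Nice r n) (hn : 1 ≤ n) {c k : ℕ}
    (hcn : c + 1 ≤ n) (hkn : k + 1 ≤ n) (hckne : c ≠ k)
    (hs : StrictPref r (c+1) (k+1)) :
    theta r n (k+1) + 2 - (n:ℤ)*((c:ℤ) - (k:ℤ)) ≤ theta r n (c+1) := by
  obtain ⟨⟨hp1, hp2⟩, _⟩ := pk_spec hN hn
  have hnZ : (1:ℤ) ≤ n := by exact_mod_cast hn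
  have hcZ : (c:ℤ) + 1 ≤ n := by exact_mod_cast hcn
  have hkZ : (k:ℤ) + 1 ≤ n := by exact_mod_cast hkn
  have hp1Z : (1:ℤ) ≤ (pk r n : ℤ) := by exact_mod_cast hp1
  by_cases ha : c + 1 ≤ pk r n
  · have g1 : g r n (c+1) = c+1 := g_eq hN hn (by omega) ha
    have g0 : g r n (k+1) < c+1 := g_lt hN hn (by omega) ha (by omega) hkn hs
    have g0' : (g r n (k+1) : ℤ) ≤ (c:ℤ) := by exact_mod_cast Nat.lt_succ_iff.mp g0
    have hmul : 2*(n:ℤ)*(g r n (k+1) : ℤ) ≤ 2*(n:ℤ)*(c:ℤ) :=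
      mul_le_mul_of_nonneg_left g0' (by positivity)
    rw [theta_of_le (s := c+1) ha, g1]
    by_cases hb : pk r n < k+1
    · rw [theta_of_gt (s := k+1) hb]
      have hpkZ : (pk r n : ℤ) ≤ (k:ℤ) := by exact_mod_cast Nat.lt_succ_iff.mp hb
      push_cast
      linarith
    · rw [theta_of_le (s := k+1) (by omega)]
      push_cast
      linarith
  · have hpc : pk r n ≤ c := by omega
    have hmono : g r n (k+1) ≤ g r n (c+1) :=
      g_mono hN (by omega) hcn (by omega) hkn hp2 hs.1
    have hmZ : (g r n (k+1) : ℤ) ≤ (g r n (c+1) : ℤ) := by exact_mod_cast hmono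
    have hmul : 2*(n:ℤ)*(g r n (k+1) : ℤ) ≤ 2*(n:ℤ)*(g r n (c+1) : ℤ) :=
      mul_le_mul_of_nonneg_left hmZ (by positivity)
    have hpcZ : (pk r n : ℤ) ≤ (c:ℤ) := by exact_mod_cast hpc
    rw [theta_of_gt (s := c+1) (by omega)]
    by_cases hb : pk r n < k+1
    · rw [theta_of_gt (s := k+1) hb]
      have hck : c < k := by
        rcases Nat.lt_or_ge c k with h | h
        · exact h
        · exfalso
          have hkc : k < c := by omega
          exact (right_strict hN hn (x := k+1) (y := c+1) (by omega) (by omega) hcn).2 hs.1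
      have hckZ : (c:ℤ) + 1 ≤ (k:ℤ) := by exact_mod_cast hck
      push_cast
      linarith
    · rw [theta_of_le (s := k+1) (by omega)]
      push_cast
      linarith



/-- The global potential function. -/
noncomputable def Phi {A : Type} [Fintype A] [DecidableEq A]
    (sp : A → ℕ → ℕ → Prop) (n : ℕ) (π : A → Finset A) : ℤ :=
  ∑ i, theta (sp i) n (π i).card

lemma step_bound {A : Type} [Fintype A] [DecidableEq A] (sp : A → ℕ → ℕ → Prop)
    (hN : ∀ i, Nice (sp i) (Fintype.card A)) {π π' : A → Finset A}
    (h : ISStep (ahgPref sp) π π') :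
    Phi sp (Fintype.card A) π + 2 ≤ Phi sp (Fintype.card A) π' := by
  classical
  obtain ⟨hπ, hπ', i, hne, her, hstr, hwp⟩ := h
  set n := Fintype.card A with hndef
  have hn : 1 ≤ n := by
    rw [hndef]
    exact Fintype.card_pos_iff.mpr ⟨i⟩
  have hsz : ∀ (σ : A → Finset A), IsPartition σ → ∀ j, 1 ≤ (σ j).card ∧ (σ j).card ≤ n := by
    intro σ hσ j
    constructor
    · exact Finset.card_pos.mpr ⟨j, hσ.1 j⟩
    · rw [hndef, ← Finset.card_univ]
      exact Finset.card_le_card (Finset.subset_univ _)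
  set J := (π' i).erase i with hJdef
  set K := (π i).erase i with hKdef
  have hiJ : i ∉ J := Finset.notMem_erase _ _
  have hiK : i ∉ K := Finset.notMem_erase _ _
  have hC' : π' i = insert i J := (Finset.insert_erase (hπ'.1 i)).symm
  have hD : π i = insert i K := (Finset.insert_erase (hπ.1 i)).symm
  have hcardC' : (π' i).card = J.card + 1 := by
    rw [hC', Finset.card_insert_of_notMem hiJ]
  have hcardD : (π i).card = K.card + 1 := by
    rw [hD, Finset.card_insert_of_notMem hiK]
  set c := J.card with hcdef
  set k := K.card with hkdef
  have hcn : c + 1 ≤ n := hcardC' ▸ (hsz π' hπ' i).2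
  have hkn : k + 1 ≤ n := hcardD ▸ (hsz π hπ i).2
  have hJK : ∀ j, j ∈ J → j ∈ K → False := by
    intro j hjJ hjK
    have hj1 : j ∈ π' i := Finset.mem_of_mem_erase hjJ
    have hj2 : j ∈ π i := Finset.mem_of_mem_erase hjK
    have hjne : j ≠ i := Finset.ne_of_mem_erase hjJ
    have e1 : π' j = π' i := hπ'.2 j i hj1
    have e2 : π j = π i := hπ.2 j i hj2
    have heq : J = K := by
      rw [hJdef, hKdef, ← e1, ← e2]
      exact her j hjne
    exact hne (by rw [hC', hD, heq])
  have hdisj : Disjoint J K := Finset.disjoint_left.mpr (fun {a} ha hb => hJK a ha hb)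
  have hnotboth : ∀ j, j ≠ i → j ∈ π' i → j ∈ π i → False := by
    intro j hjne hj1 hj2
    exact hJK j (Finset.mem_erase.mpr ⟨hjne, hj1⟩) (Finset.mem_erase.mpr ⟨hjne, hj2⟩)
  have hJspec : ∀ j ∈ J, π j = J ∧ π' j = π' i := by
    intro j hj
    have hj1 : j ∈ π' i := Finset.mem_of_mem_erase hj
    have hjne : j ≠ i := Finset.ne_of_mem_erase hj
    have e1 : π' j = π' i := hπ'.2 j i hj1
    have hiπj : i ∉ π j := by
      intro hij
      have e3 : π i = π j := hπ.2 i j hij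
      have hj2 : j ∈ π i := by rw [e3]; exact hπ.1 j
      exact hnotboth j hjne hj1 hj2
    refine ⟨?_, e1⟩
    have h4 : π j = (π j).erase i := (Finset.erase_eq_of_notMem hiπj).symm
    rw [h4, ← her j hjne, e1, hJdef]
  have hKspec : ∀ j ∈ K, π j = π i ∧ π' j = K := by
    intro j hj
    have hj2 : j ∈ π i := Finset.mem_of_mem_erase hj
    have hjne : j ≠ i := Finset.ne_of_mem_erase hj
    have e2 : π j = π i := hπ.2 j i hj2
    have hiπ'j : i ∉ π' j := by
      intro hij
      have e3 : π' i = π' j := hπ'.2 i j hij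
      have hj1 : j ∈ π' i := by rw [e3]; exact hπ'.1 j
      exact hnotboth j hjne hj1 hj2
    refine ⟨e2, ?_⟩
    have h4 : π' j = (π' j).erase i := (Finset.erase_eq_of_notMem hiπ'j).symm
    rw [h4, her j hjne, e2, hKdef]
  have hrest : ∀ j, j ∉ insert i (J ∪ K) → π' j = π j := by
    intro j hj
    rw [Finset.mem_insert, Finset.mem_union] at hj
    push_neg at hj
    obtain ⟨hjne, hjJ, hjK⟩ := hj
    have hiπj : i ∉ π j := by
      intro hij
      have e3 : π i = π j := hπ.2 i j hij
      have hj2 : j ∈ π i := by rw [e3]; exact hπ.1 j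
      exact hjK (Finset.mem_erase.mpr ⟨hjne, hj2⟩)
    have hiπ'j : i ∉ π' j := by
      intro hij
      have e3 : π' i = π' j := hπ'.2 i j hij
      have hj1 : j ∈ π' i := by rw [e3]; exact hπ'.1 j
      exact hjJ (Finset.mem_erase.mpr ⟨hjne, hj1⟩)
    calc π' j = (π' j).erase i := (Finset.erase_eq_of_notMem hiπ'j).symm
      _ = (π j).erase i := her j hjne
      _ = π j := Finset.erase_eq_of_notMem hiπj
  -- mover's strict preference on sizes
  have hmv : StrictPref (sp i) ((π' i).card) ((π i).card) := hstr
  rw [hcardC', hcardD] at hmv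
  have hckne : c ≠ k := by
    intro hck
    rw [hck] at hmv
    exact hmv.2 hmv.1
  -- the difference function
  set f : A → ℤ := fun j => theta (sp j) n (π' j).card - theta (sp j) n (π j).card with hfdef
  have hsum : Phi sp n π' - Phi sp n π = ∑ j, f j := by
    rw [hfdef]
    rw [show Phi sp n π' = ∑ j, theta (sp j) n (π' j).card from rfl,
      show Phi sp n π = ∑ j, theta (sp j) n (π j).card from rfl,
      ← Finset.sum_sub_distrib]
  have hsplit : ∑ j, f j = f i + (∑ j ∈ J, f j + ∑ j ∈ K, f j) := by
    rw [← Finset.sum_union hdisj,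
      ← Finset.sum_insert (by simp [Finset.mem_union, hiJ, hiK])]
    refine (Finset.sum_subset (Finset.subset_univ _) ?_).symm
    intro x _ hx
    rw [hfdef]
    simp only
    rw [hrest x hx]
    exact sub_self _
  have hJsum : ∑ j ∈ J, f j = (c:ℤ) * n := by
    have hall : ∀ j ∈ J, f j = (n:ℤ) := by
      intro j hj
      obtain ⟨hpj, hpj'⟩ := hJspec j hj
      have hc1 : 1 ≤ c := Finset.card_pos.mpr ⟨j, hj⟩
      have hcardj : (π j).card = c := by rw [hpj]
      have hcardj' : (π' j).card = c + 1 := by rw [hpj', hcardC']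
      have hpref : sp j (c+1) c := by
        have h2 : sp j ((π' j).card) ((π j).card) := hwp j hj
        rwa [hcardj, hcardj'] at h2
      have := theta_joined (hN j) hn hc1 hcn hpref
      rw [hfdef]
      simp only
      rw [hcardj, hcardj', this]
      ring
    rw [Finset.sum_congr rfl hall, Finset.sum_const, nsmul_eq_mul, hcdef]
  have hKsum : -((k:ℤ) * n) ≤ ∑ j ∈ K, f j := by
    have hall : ∀ j ∈ K, -(n:ℤ) ≤ f j := by
      intro j hj
      obtain ⟨hpj, hpj'⟩ := hKspec j hj
      have hk1 : 1 ≤ k := Finset.card_pos.mpr ⟨j, hj⟩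
      have hcardj : (π j).card = k + 1 := by rw [hpj, hcardD]
      have hcardj' : (π' j).card = k := by rw [hpj']
      have h2 := theta_aband (hN j) hn hk1 hkn
      rw [hfdef]
      simp only
      rw [hcardj, hcardj']
      linarith
    have h3 := Finset.card_nsmul_le_sum K f (-(n:ℤ)) hall
    rw [nsmul_eq_mul] at h3
    rw [← hkdef] at h3
    linarith [h3]
  have hmov := theta_mover (hN i) hn hcn hkn hckne hmv
  have hfi : 2 - (n:ℤ) * ((c:ℤ) - (k:ℤ)) ≤ f i := by
    rw [hfdef]
    simp only
    rw [hcardC', hcardD]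
    linarith
  have hnZ : (0:ℤ) ≤ (n:ℤ) := by positivity
  have : (2:ℤ) ≤ ∑ j, f j := by
    rw [hsplit]
    have expand : (n:ℤ) * ((c:ℤ) - (k:ℤ)) = (c:ℤ)*n - (k:ℤ)*n := by ring
    linarith [hfi, hKsum, hJsum.ge, hJsum.le]
  linarith [hsum ▸ this]

lemma Phi_le {A : Type} [Fintype A] [DecidableEq A] (sp : A → ℕ → ℕ → Prop)
    (hN : ∀ i, Nice (sp i) (Fintype.card A)) {π : A → Finset A} (hπ : IsPartition π) :
    Phi sp (Fintype.card A) π ≤ (Fintype.card A : ℤ) * ((Fintype.card A : ℤ)^2 + Fintype.card A) := by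
  classical
  set n := Fintype.card A with hndef
  have hall : ∀ j ∈ Finset.univ, theta (sp j) n (π j).card ≤ (n:ℤ)^2 + n := by
    intro j _
    have hn : 1 ≤ n := by
      rw [hndef]; exact Fintype.card_pos_iff.mpr ⟨j⟩
    refine theta_le (hN j) hn (Finset.card_pos.mpr ⟨j, hπ.1 j⟩) ?_
    rw [hndef, ← Finset.card_univ]
    exact Finset.card_le_card (Finset.subset_univ _)
  have := Finset.sum_le_card_nsmul Finset.univ _ _ hall
  rw [Finset.card_univ, nsmul_eq_mul] at this
  exact this

lemma Phi_ge {A : Type} [Fintype A] [DecidableEq A] (sp : A → ℕ → ℕ → Prop)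
    (hN : ∀ i, Nice (sp i) (Fintype.card A)) {π : A → Finset A} (hπ : IsPartition π) :
    (Fintype.card A : ℤ) * ((Fintype.card A : ℤ) - (Fintype.card A : ℤ)^2)
      ≤ Phi sp (Fintype.card A) π := by
  classical
  set n := Fintype.card A with hndef
  have hall : ∀ j ∈ Finset.univ, (n:ℤ) - (n:ℤ)^2 ≤ theta (sp j) n (π j).card := by
    intro j _
    have hn : 1 ≤ n := by
      rw [hndef]; exact Fintype.card_pos_iff.mpr ⟨j⟩
    refine theta_ge (hN j) hn (Finset.card_pos.mpr ⟨j, hπ.1 j⟩) ?_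
    rw [hndef, ← Finset.card_univ]
    exact Finset.card_le_card (Finset.subset_univ _)
  have := Finset.card_nsmul_le_sum Finset.univ _ _ hall
  rw [Finset.card_univ, nsmul_eq_mul] at this
  exact this


end AHGAux

/-- In every anonymous hedonic game on `n` agents with strict and naturally
single-peaked preferences, every sequence of IS deviations has length at most
`n^3 + n^2`. -/
theorem ahg_strict_natSP_converges_in_n3
    (A : Type) [Fintype A] [DecidableEq A]
    (sp : A → ℕ → ℕ → Prop)
    (hwo : ∀ i, WeakOrderOn (sp i) (Set.Icc 1 (Fintype.card A)))
    (hstrict : ∀ i, StrictPrefsOn (sp i) (Set.Icc 1 (Fintype.card A)))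
    (hsp : ∀ i, SinglePeakedOn (sp i) (Set.Icc 1 (Fintype.card A)))
    (m : ℕ) (seq : ℕ → A → Finset A)
    (hstep : ∀ k < m, ISStep (ahgPref sp) (seq k) (seq (k + 1))) :
    m ≤ Fintype.card A ^ 3 + Fintype.card A ^ 2 := by
  classical
  rcases Nat.eq_zero_or_pos m with rfl | hm
  · exact Nat.zero_le _
  have hNice : ∀ i, AHGAux.Nice (sp i) (Fintype.card A) := by
    intro i
    refine ⟨?_, ?_, ?_, ?_⟩
    · intro x hx y hy
      exact (hwo i).1 x (Set.mem_Icc.mpr (Finset.mem_Icc.mp hx))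
        y (Set.mem_Icc.mpr (Finset.mem_Icc.mp hy))
    · intro x hx y hy z hz
      exact (hwo i).2 x (Set.mem_Icc.mpr (Finset.mem_Icc.mp hx))
        y (Set.mem_Icc.mpr (Finset.mem_Icc.mp hy))
        z (Set.mem_Icc.mpr (Finset.mem_Icc.mp hz))
    · intro x hx y hy
      exact hstrict i x (Set.mem_Icc.mpr (Finset.mem_Icc.mp hx))
        y (Set.mem_Icc.mpr (Finset.mem_Icc.mp hy))
    · intro x hx y hy z hz
      exact hsp i x (Set.mem_Icc.mpr (Finset.mem_Icc.mp hx))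
        y (Set.mem_Icc.mpr (Finset.mem_Icc.mp hy))
        z (Set.mem_Icc.mpr (Finset.mem_Icc.mp hz))
  set n := Fintype.card A with hndef
  have key : ∀ j, j ≤ m → AHGAux.Phi sp n (seq 0) + 2*(j:ℤ) ≤ AHGAux.Phi sp n (seq j) := by
    intro j
    induction j with
    | zero => intro _; simp
    | succ t ih =>
      intro hjm
      have h1 := ih (by omega)
      have h2 : AHGAux.Phi sp n (seq t) + 2 ≤ AHGAux.Phi sp n (seq (t + 1)) :=
        AHGAux.step_bound sp hNice (hstep t (by omega))
      push_cast
      push_cast at h1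
      linarith
  have hP0 : IsPartition (seq 0) := (hstep 0 hm).1
  have hPm : IsPartition (seq m) := by
    have h3 := (hstep (m-1) (by omega)).2.1
    rwa [Nat.sub_add_cancel (by omega)] at h3
  have b1 := AHGAux.Phi_le sp hNice hPm
  have b2 := AHGAux.Phi_ge sp hNice hP0
  have b1' : AHGAux.Phi sp n (seq m) ≤ (n:ℤ) * ((n:ℤ)^2 + n) := b1
  have b2' : (n:ℤ) * ((n:ℤ) - (n:ℤ)^2) ≤ AHGAux.Phi sp n (seq 0) := b2
  have hkey := key m le_rfl
  have hn2 : (0:ℤ) ≤ (n:ℤ)^2 := sq_nonneg _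
  have hfin : (m:ℤ) ≤ ((n^3 + n^2 : ℕ) : ℤ) := by
    push_cast
    nlinarith [hkey, b1', b2']
  exact_mod_cast hfin
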